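/- Let (c_l)_{l∈ℤ} be a sequence of complex numbers with |c_l| ≤ M for all l, let φ be a C² 1-periodic function, and for n ∈ ℕ define E_n(x) = φ(x) · Σ_{l=−n}^{n} c_l e(lx) − Σ_{l=−n}^{n} (c ∗ φ̂)(l) e(lx). Then for every n and every j ∈ ℤ, the Fourier coefficients of E_n satisfy |Ê_n(j)| ≤ M · Σ_{|s| ≥ | |j| − n |} |φ̂(s)|. -/

import Mathlib

open Filter MeasureTheory

/-- `e(x) = e^{2πix}`. -/
noncomputable def expc (x : ℝ) : ℂ := Complex.exp (2 * (Real.pi : ℂ) * Complex.I * (x : ℂ))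

/-- Symmetric partial sums `S_n(x) = Σ_{l=-n}^n c_l e(lx)`. -/
noncomputable def Sc (c : ℤ → ℂ) (n : ℕ) (x : ℝ) : ℂ :=
  ∑ l ∈ Finset.Icc (-(n : ℤ)) (n : ℤ), c l * expc ((l : ℝ) * x)

/-- Fourier coefficient `φ̂(l) = ∫₀¹ φ(x) e(-lx) dx` of a 1-periodic function. -/
noncomputable def fcC (φ : ℝ → ℂ) (l : ℤ) : ℂ :=
  ∫ x in (0:ℝ)..1, φ x * expc (-(l : ℝ) * x)


/-- Discrete convolution `(c ∗ φ̂)(l) = Σ_j c_j φ̂(l - j)`. -/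
noncomputable def convC (c : ℤ → ℂ) (φ : ℝ → ℂ) (l : ℤ) : ℂ :=
  ∑' j : ℤ, c j * fcC φ (l - j)

open intervalIntegral

lemma Periodic.deriv' {f : ℝ → ℂ} (hp : Function.Periodic f 1) :
    Function.Periodic (deriv f) 1 := by
  intro x
  have : (fun y : ℝ => f (y + 1)) = f := funext hp
  rw [← deriv_comp_add_const, this]

lemma expc_eq (x : ℝ) : expc x = Complex.exp ((2 * (Real.pi:ℂ) * Complex.I) * (x:ℂ)) := rfl

lemma expc_add (a b : ℝ) : expc (a + b) = expc a * expc b := by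
  simp only [expc_eq, ← Complex.exp_add]
  push_cast; ring_nf

lemma abs_expc (x : ℝ) : ‖expc x‖ = 1 := by
  rw [expc_eq, Complex.norm_exp]
  simp [Complex.mul_re, Complex.mul_I_re]

lemma continuous_expc_lin (r : ℝ) : Continuous fun x : ℝ => expc (r * x) := by
  simp only [expc_eq]
  fun_prop

lemma hasDerivAt_expc (r : ℝ) (x : ℝ) :
    HasDerivAt (fun y : ℝ => expc (r * y)) (2 * (Real.pi:ℂ) * Complex.I * r * expc (r * x)) x := by
  have h : ∀ y : ℝ, expc (r * y) = Complex.exp ((2 * (Real.pi:ℂ) * Complex.I * r) * (y:ℂ)) := by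
    intro y; rw [expc_eq]; push_cast; ring_nf
  simp only [h]
  have h1 : HasDerivAt (fun y : ℝ => ((2 * (Real.pi:ℂ) * Complex.I * r) * (y:ℂ)))
      (2 * (Real.pi:ℂ) * Complex.I * r) x := by
    simpa only [mul_one, id_eq] using
      ((hasDerivAt_id ((x:ℝ):ℂ)).const_mul (2 * (Real.pi:ℂ) * Complex.I * r)).comp_ofReal
  have h2 := (Complex.hasDerivAt_exp ((2 * (Real.pi:ℂ) * Complex.I * r) * (x:ℂ))).comp x h1
  exact h2.congr_deriv (by ring)

lemma expc_int (k : ℤ) : expc (k : ℝ) = 1 := by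
  rw [expc_eq]
  have : (2 * (Real.pi:ℂ) * Complex.I) * ((k:ℝ):ℂ) = (k:ℤ) * (2 * (Real.pi:ℂ) * Complex.I) := by
    push_cast; ring
  rw [this, Complex.exp_int_mul_two_pi_mul_I]

lemma integral_expc (k : ℤ) :
    (∫ x in (0:ℝ)..1, expc ((k:ℝ) * x)) = if k = 0 then 1 else 0 := by
  rcases eq_or_ne k 0 with hk | hk
  · simp [hk, expc_eq]
  · simp only [if_neg hk]
    have h : ∀ x : ℝ, expc ((k:ℝ) * x) = Complex.exp ((2 * (Real.pi:ℂ) * Complex.I * k) * (x:ℂ)) := by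
      intro x; rw [expc_eq]; push_cast; ring_nf
    simp only [h]
    rw [integral_exp_mul_complex]
    · rw [show (2 * (Real.pi:ℂ) * Complex.I * k) * (1:ℝ) = (k:ℤ) * (2 * (Real.pi:ℂ) * Complex.I) by push_cast; ring]
      simp [Complex.exp_int_mul_two_pi_mul_I]
    · simp [Real.pi_ne_zero, Complex.I_ne_zero, hk]

lemma ibp (f : ℝ → ℂ) (hf : ContDiff ℝ 1 f) (hp : Function.Periodic f 1) (s : ℤ) (hs : s ≠ 0) :
    fcC f s = fcC (deriv f) s / (2 * (Real.pi:ℂ) * Complex.I * s) := by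
  set c0 : ℂ := 2 * (Real.pi:ℂ) * Complex.I * (-(s:ℝ)) with hc0
  have hc0ne : c0 ≠ 0 := by
    simp [hc0, Real.pi_ne_zero, Complex.I_ne_zero, hs]
  have hv : ∀ x ∈ Set.uIcc (0:ℝ) 1, HasDerivAt (fun y : ℝ => expc (-(s:ℝ) * y) / c0)
      (expc (-(s:ℝ) * x)) x := by
    intro x _
    have h0 := (hasDerivAt_expc (-(s:ℝ)) x).div_const c0
    have heq : (2 * (Real.pi:ℂ) * Complex.I * ((-(s:ℝ) : ℝ):ℂ)) = c0 := by
      rw [hc0]; push_cast; ring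
    rwa [heq, mul_div_cancel_left₀ _ hc0ne] at h0
  have hu : ∀ x ∈ Set.uIcc (0:ℝ) 1, HasDerivAt f (deriv f x) x := fun x _ =>
    (hf.differentiable one_ne_zero).differentiableAt.hasDerivAt
  have hdc : Continuous (deriv f) := (hf.continuous_deriv le_rfl)
  have h := integral_mul_deriv_eq_deriv_mul hu hv
    (hdc.intervalIntegrable 0 1)
    ((continuous_expc_lin (-(s:ℝ))).intervalIntegrable 0 1)
  -- h : ∫ f x * expc(-s x) = f 1 * (expc(-s)/c0) - f 0 * (expc 0/c0) - ∫ deriv f x * (expc(-s x)/c0)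
  have hb : f 1 * (expc (-(s:ℝ) * 1) / c0) - f 0 * (expc (-(s:ℝ) * 0) / c0) = 0 := by
    have h1 : f 1 = f 0 := by simpa using (hp 0)
    have h2 : expc (-(s:ℝ) * 1) = 1 := by
      rw [mul_one, show (-(s:ℝ)) = ((-s : ℤ) : ℝ) by push_cast; ring, expc_int]
    rw [h1, h2, mul_zero, expc_eq]
    simp
  rw [fcC, h, hb, zero_sub]
  rw [show (∫ x in (0:ℝ)..1, deriv f x * (expc (-(s:ℝ) * x) / c0))
      = (∫ x in (0:ℝ)..1, deriv f x * expc (-(s:ℝ) * x)) / c0 by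
    rw [← intervalIntegral.integral_div]; congr 1; ext x; ring]
  rw [fcC, hc0]
  push_cast
  field_simp

lemma fcC_abs_le (ψ : ℝ → ℂ) (s : ℤ) :
    ‖fcC ψ s‖ ≤ ∫ x in (0:ℝ)..1, ‖ψ x‖ := by
  rw [fcC]
  have h := intervalIntegral.norm_integral_le_integral_norm
    (f := fun x => ψ x * expc (-(s:ℝ) * x)) (a := (0:ℝ)) (b := 1) (μ := volume) zero_le_one
  simp only [norm_mul, abs_expc, mul_one] at h
  exact h

lemma C_nonneg (ψ : ℝ → ℂ) : 0 ≤ ∫ x in (0:ℝ)..1, ‖ψ x‖ :=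
  intervalIntegral.integral_nonneg zero_le_one (fun x _ => norm_nonneg _)

set_option maxHeartbeats 1000000 in
lemma summable_fcC (φ : ℝ → ℂ) (hφ : ContDiff ℝ 2 φ) (hper : Function.Periodic φ 1) :
    Summable (fun s : ℤ => ‖fcC φ s‖) := by
  have h2 : ContDiff ℝ (1+1 : WithTop ℕ∞) φ := by
    have e : (1+1 : WithTop ℕ∞) = 2 := rfl
    rw [e]; exact hφ
  have hd1 := contDiff_succ_iff_deriv.mp h2
  have hφ1 : ContDiff ℝ 1 φ := hφ.of_le (by norm_num)
  have hdd : ContDiff ℝ 1 (deriv φ) := hd1.2.2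
  have hpd : Function.Periodic (deriv φ) 1 := Periodic.deriv' hper
  set ψ := deriv (deriv φ) with hψ
  have hψc : Continuous ψ := hdd.continuous_deriv le_rfl
  set C := ∫ x in (0:ℝ)..1, ‖ψ x‖ with hC
  have hCnn : 0 ≤ C := C_nonneg ψ
  have key : ∀ s : ℤ, s ≠ 0 → ‖fcC φ s‖ ≤ C / (s:ℝ)^2 := by
    intro s hs
    have e1 := ibp φ hφ1 hper s hs
    have e2 := ibp (deriv φ) hdd hpd s hs
    rw [e1, e2]
    rw [norm_div, norm_div]
    set A := ‖2 * (Real.pi:ℂ) * Complex.I * s‖ with hA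
    have hAval : A = 2 * Real.pi * |(s:ℝ)| := by
      rw [hA, norm_mul, norm_mul, norm_mul]
      simp [abs_of_pos Real.pi_pos, Complex.norm_intCast, Int.cast_abs]
    rw [div_div, ← sq]
    apply div_le_div₀ hCnn (fcC_abs_le ψ s)
    · positivity
    · rw [hAval, ← _root_.sq_abs (s:ℝ)]
      nlinarith [abs_nonneg (s:ℝ), sq_nonneg (|(s:ℝ)|), sq_nonneg (Real.pi * |(s:ℝ)|),
        Real.pi_gt_three,
        mul_le_mul_of_nonneg_right Real.pi_gt_three.le (sq_nonneg (|(s:ℝ)|))]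
  have hs2 : Summable (fun s : ℤ => C / (s:ℝ)^2) := by
    have h := (Real.summable_one_div_int_pow (p := 2)).mpr (by norm_num)
    have := h.mul_left C
    simpa only [mul_one_div] using this
  rw [← Finset.summable_compl_iff ({0} : Finset ℤ)]
  exact Summable.of_nonneg_of_le (fun x => norm_nonneg _)
    (fun x => key x (by simpa using x.2)) (hs2.subtype _)

lemma continuous_Sc (d : ℤ → ℂ) (n : ℕ) : Continuous (Sc d n) := by
  unfold Sc
  apply continuous_finset_sum
  intro l _
  exact continuous_const.mul (continuous_expc_lin (l : ℝ))

lemma fcC_sub (f g : ℝ → ℂ) (hf : Continuous f) (hg : Continuous g) (j : ℤ) :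
    fcC (fun x => f x - g x) j = fcC f j - fcC g j := by
  simp only [fcC, sub_mul]
  exact intervalIntegral.integral_sub
    ((hf.mul (continuous_expc_lin _)).intervalIntegrable 0 1)
    ((hg.mul (continuous_expc_lin _)).intervalIntegrable 0 1)

lemma fcC_Sc (d : ℤ → ℂ) (n : ℕ) (j : ℤ) :
    fcC (Sc d n) j = if j ∈ Finset.Icc (-(n:ℤ)) (n:ℤ) then d j else 0 := by
  have h : ∀ x : ℝ, Sc d n x * expc (-(j:ℝ) * x)
      = ∑ l ∈ Finset.Icc (-(n:ℤ)) (n:ℤ), d l * expc (((l - j : ℤ) : ℝ) * x) := by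
    intro x
    rw [Sc, Finset.sum_mul]
    refine Finset.sum_congr rfl (fun l _ => ?_)
    rw [mul_assoc, ← expc_add]
    congr 1
    push_cast
    ring
  simp only [fcC, h]
  rw [intervalIntegral.integral_finset_sum]
  · have : ∀ l ∈ Finset.Icc (-(n:ℤ)) (n:ℤ),
        (∫ x in (0:ℝ)..1, d l * expc (((l - j : ℤ) : ℝ) * x))
        = if l = j then d l else 0 := by
      intro l _
      rw [intervalIntegral.integral_const_mul, integral_expc]
      rcases eq_or_ne l j with h | h
      · simp [h]
      · rw [if_neg (sub_ne_zero.mpr h), if_neg h, mul_zero]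
    rw [Finset.sum_congr rfl this, Finset.sum_ite_eq' (Finset.Icc (-(n:ℤ)) (n:ℤ)) j d]
  · intro l _
    exact (continuous_const.mul (continuous_expc_lin _)).intervalIntegrable 0 1

lemma fcC_mul_Sc (φ : ℝ → ℂ) (hφc : Continuous φ) (c : ℤ → ℂ) (n : ℕ) (j : ℤ) :
    fcC (fun x => φ x * Sc c n x) j
      = ∑ l ∈ Finset.Icc (-(n:ℤ)) (n:ℤ), c l * fcC φ (j - l) := by
  have h : ∀ x : ℝ, (φ x * Sc c n x) * expc (-(j:ℝ) * x)
      = ∑ l ∈ Finset.Icc (-(n:ℤ)) (n:ℤ), c l * (φ x * expc (-((j - l : ℤ) : ℝ) * x)) := by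
    intro x
    rw [Sc, Finset.mul_sum, Finset.sum_mul]
    refine Finset.sum_congr rfl (fun l _ => ?_)
    have : expc ((l:ℝ) * x) * expc (-(j:ℝ) * x) = expc (-((j - l : ℤ) : ℝ) * x) := by
      rw [← expc_add]
      congr 1
      push_cast
      ring
    calc φ x * (c l * expc ((l:ℝ) * x)) * expc (-(j:ℝ) * x)
        = c l * (φ x * (expc ((l:ℝ) * x) * expc (-(j:ℝ) * x))) := by ring
      _ = c l * (φ x * expc (-((j - l : ℤ) : ℝ) * x)) := by rw [this]
  simp only [fcC, h]
  rw [intervalIntegral.integral_finset_sum]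
  · refine Finset.sum_congr rfl (fun l _ => ?_)
    rw [intervalIntegral.integral_const_mul]
  · intro l _
    exact (continuous_const.mul (hφc.mul (continuous_expc_lin _))).intervalIntegrable 0 1

set_option maxHeartbeats 1000000 in
/-- For `|c_l| ≤ M`, `φ` a `C²` 1-periodic function, and
`E_n(x) = φ(x) S_n(x) - Σ_{|l| ≤ n} (c∗φ̂)(l) e(lx)`, the Fourier coefficients of `E_n`
satisfy `|Ê_n(j)| ≤ M Σ_{|s| ≥ ||j| - n|} |φ̂(s)|`. -/
theorem statement16 (c : ℤ → ℂ) (M : ℝ) (φ : ℝ → ℂ) (E : ℕ → ℝ → ℂ)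
    (hc : ∀ l : ℤ, ‖c l‖ ≤ M)
    (hφ : ContDiff ℝ 2 φ) (hper : Function.Periodic φ 1)
    (hE : ∀ (n : ℕ) (x : ℝ), E n x = φ x * Sc c n x - Sc (convC c φ) n x) :
    ∀ (n : ℕ) (j : ℤ), ‖fcC (E n) j‖ ≤
      M * ∑' s : ℤ, (if |(|j| - (n : ℤ))| ≤ |s| then ‖fcC φ s‖ else 0) := by
  intro n j
  have hM : 0 ≤ M := le_trans (norm_nonneg _) (hc 0)
  set I := Finset.Icc (-(n:ℤ)) (n:ℤ) with hI
  set F : ℤ → ℝ := fun s => ‖fcC φ s‖ with hFdef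
  have hF : Summable F := summable_fcC φ hφ hper
  set g : ℤ → ℝ := fun s => if |(|j| - (n:ℤ))| ≤ |s| then F s else 0 with hgdef
  have hgnn : ∀ s, 0 ≤ g s := by
    intro s
    by_cases h : |(|j| - (n:ℤ))| ≤ |s| <;>
      simp [hgdef, hFdef, h, norm_nonneg]
  have hg : Summable g := by
    refine Summable.of_nonneg_of_le hgnn (fun s => ?_) hF
    by_cases h : |(|j| - (n:ℤ))| ≤ |s| <;>
      simp [hgdef, hFdef, h, norm_nonneg]
  set a : ℤ → ℂ := fun l => c l * fcC φ (j - l) with hadef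
  have habs : ∀ l, ‖a l‖ ≤ M * F (j - l) := by
    intro l
    rw [hadef]
    dsimp only
    rw [norm_mul]
    exact mul_le_mul_of_nonneg_right (hc l) (norm_nonneg _)
  have hFj : Summable (fun l => F (j - l)) := by
    have := (Equiv.subLeft j).summable_iff.mpr hF
    simpa [Function.comp_def] using this
  have hsa : Summable (fun l => ‖a l‖) :=
    Summable.of_nonneg_of_le (fun l => norm_nonneg _) habs (hFj.mul_left M)
  have ha : Summable a := by
    apply Summable.of_norm
    simpa only using hsa
  have hgj : Summable (fun l => g (j - l)) := by
    have := (Equiv.subLeft j).summable_iff.mpr hg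
    simpa [Function.comp_def] using this
  have htg : (∑' l : ℤ, g (j - l)) = ∑' s : ℤ, g s := by
    have := Equiv.tsum_eq (Equiv.subLeft j) g
    simpa using this
  -- membership facts
  have hmem : ∀ l : ℤ, l ∈ I ↔ |l| ≤ (n:ℤ) := by
    intro l
    rw [hI, Finset.mem_Icc, abs_le]
  -- key condition
  have hcond1 : j ∈ I → ∀ l : ℤ, l ∉ I → |(|j| - (n:ℤ))| ≤ |j - l| := by
    intro hj l hl
    rw [hmem] at hj hl
    push_neg at hl
    have h1 : |l| - |j| ≤ |l - j| := abs_sub_abs_le_abs_sub l j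
    rw [abs_sub_comm] at h1
    have h2 : |(|j| - (n:ℤ))| = (n:ℤ) - |j| := by
      rw [abs_of_nonpos (by omega)]
      ring
    omega
  have hcond2 : j ∉ I → ∀ l : ℤ, l ∈ I → |(|j| - (n:ℤ))| ≤ |j - l| := by
    intro hj l hl
    rw [hmem] at hj hl
    push_neg at hj
    have h1 : |j| - |l| ≤ |j - l| := abs_sub_abs_le_abs_sub j l
    have h2 : |(|j| - (n:ℤ))| = |j| - (n:ℤ) := abs_of_nonneg (by omega)
    omega
  -- compute the Fourier coefficient of E n
  have hEeq : E n = fun x => φ x * Sc c n x - Sc (convC c φ) n x := funext (hE n)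
  have hcoef : fcC (E n) j = (∑ l ∈ I, a l) - (if j ∈ I then convC c φ j else 0) := by
    rw [hEeq, fcC_sub (fun x => φ x * Sc c n x) _ (hφ.continuous.mul (continuous_Sc c n)) (continuous_Sc _ n) j,
      fcC_mul_Sc φ hφ.continuous c n j, fcC_Sc]
  have hconv : convC c φ j = ∑' l, a l := rfl
  by_cases hj : j ∈ I
  · -- tail bound
    rw [hcoef, if_pos hj, hconv]
    have hsplit : (∑ l ∈ I, a l) - (∑' l, a l) = -∑' l : {l : ℤ // l ∉ I}, a l := by
      rw [← ha.sum_add_tsum_subtype_compl I]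
      ring
    rw [hsplit, norm_neg]
    have hsub : Summable (fun l : {l : ℤ // l ∉ I} => ‖a (l : ℤ)‖) := by
      have h0 := hsa.subtype {l : ℤ | l ∉ I}
      exact h0
    calc ‖∑' l : {l : ℤ // l ∉ I}, a (l : ℤ)‖
        ≤ ∑' l : {l : ℤ // l ∉ I}, ‖a (l : ℤ)‖ := by
          simpa only using norm_tsum_le_tsum_norm hsub
      _ ≤ ∑' l : ℤ, M * g (j - l) := by
          refine Summable.tsum_le_tsum_of_inj (Subtype.val) Subtype.val_injective
            (fun l _ => mul_nonneg hM (hgnn _)) (fun l => ?_)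
            (hsa.subtype _) (hgj.mul_left M)
          refine le_trans (habs (l : ℤ)) ?_
          have hge : g (j - (l : ℤ)) = F (j - (l : ℤ)) := by
            rw [hgdef]
            exact if_pos (hcond1 hj (l : ℤ) l.2)
          rw [hge]
      _ = M * ∑' s : ℤ, g s := by rw [tsum_mul_left, htg]
  · rw [hcoef, if_neg hj, sub_zero]
    calc ‖∑ l ∈ I, a l‖
        ≤ ∑ l ∈ I, ‖a l‖ := norm_sum_le _ _
      _ ≤ ∑ l ∈ I, M * g (j - l) := by
          refine Finset.sum_le_sum (fun l hl => ?_)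
          refine le_trans (habs l) ?_
          have hge : g (j - l) = F (j - l) := by
            rw [hgdef]
            exact if_pos (hcond2 hj l hl)
          rw [hge]
      _ ≤ ∑' l : ℤ, M * g (j - l) :=
          Summable.sum_le_tsum I (fun l _ => mul_nonneg hM (hgnn _)) (hgj.mul_left M)
      _ = M * ∑' s : ℤ, g s := by rw [tsum_mul_left, htg]
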